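/- arXiv:0910.1645 — 2 statements merged into one kernel-verified Lean document; each statement's English description precedes it below -/
import Mathlib

section
/- Let J_1, …, J_8 be an anticommuting family of almost Hermitian structures on ℝ^16 and set P = J_1J_2···J_8. Then P is symmetric (self-adjoint), orthogonal, and Tr P = 0; consequently the eigenvalues of P are +1 and −1, each eigenspace V_+ and V_− has dimension 8, and J_iV_± = V_∓ for every i = 1, …, 8. -/
abbrev E16 := EuclideanSpace ℝ (Fin 16)

set_option maxHeartbeats 3000000 in
/-- For an anticommuting family of 8 almost Hermitian structures on `ℝ¹⁶`, the product
`P = J₁J₂⋯J₈` is symmetric, orthogonal, traceless; its eigenvalues are `±1`, each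
eigenspace is 8-dimensional, and every `Jᵢ` interchanges the two eigenspaces. -/
theorem stmt16 (J : Fin 8 → (E16 →ₗ[ℝ] E16))
    (hskew : ∀ i, LinearMap.adjoint (J i) = -(J i))
    (hcl : ∀ i j, J i * J j + J j * J i =
      if i = j then (-2 : ℝ) • (1 : E16 →ₗ[ℝ] E16) else 0)
    (P : E16 →ₗ[ℝ] E16) (hP : P = ((List.finRange 8).map J).prod) :
    LinearMap.adjoint P = P ∧
    (∀ x y : E16, (inner ℝ (P x) (P y) : ℝ) = inner ℝ x y) ∧
    LinearMap.trace ℝ E16 P = 0 ∧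
    (∀ μ : ℝ, Module.End.HasEigenvalue P μ → μ = 1 ∨ μ = -1) ∧
    Module.finrank ℝ (Module.End.eigenspace P 1) = 8 ∧
    Module.finrank ℝ (Module.End.eigenspace P (-1)) = 8 ∧
    (∀ i, Submodule.map (J i) (Module.End.eigenspace P 1) = Module.End.eigenspace P (-1) ∧
      Submodule.map (J i) (Module.End.eigenspace P (-1)) = Module.End.eigenspace P 1) := by
  have sw2 : ∀ (i j : Fin 8), i < j → J j * J i = -(J i * J j) := by
    intro i j h
    have := hcl j i
    rw [if_neg (ne_of_gt h)] at this
    exact eq_neg_of_add_eq_zero_left this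
  have sw : ∀ (i j : Fin 8), i < j → ∀ c, J j * (J i * c) = -(J i * (J j * c)) := by
    intro i j h c
    rw [← mul_assoc, sw2 i j h, neg_mul, mul_assoc]
  have sq2 : ∀ i, J i * J i = -1 := by
    intro i
    have h := hcl i i
    rw [if_pos rfl] at h
    have h2 : J i * J i = (2⁻¹ : ℝ) • ((-2:ℝ) • (1 : E16 →ₗ[ℝ] E16)) := by
      rw [← h, smul_add]
      rw [show ((2:ℝ)⁻¹ • (J i * J i) + (2:ℝ)⁻¹ • (J i * J i)) = ((2:ℝ)⁻¹ + (2:ℝ)⁻¹) • (J i * J i) from (add_smul _ _ _).symm]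
      norm_num
    rw [h2, smul_smul]
    norm_num
  have sq : ∀ (i : Fin 8) c, J i * (J i * c) = -c := by
    intro i c; rw [← mul_assoc, sq2, neg_one_mul]
  have hP' : P = J 0 * (J 1 * (J 2 * (J 3 * (J 4 * (J 5 * (J 6 * J 7)))))) := by
    rw [hP]
    simp [List.finRange_succ, mul_assoc]
  -- P squared is the identity
  have hP2 : P * P = 1 := by
    rw [hP']
    simp only [sw 0 1 (by decide), sw 0 2 (by decide), sw 1 2 (by decide), sw 0 3 (by decide), sw 1 3 (by decide), sw 2 3 (by decide), sw 0 4 (by decide), sw 1 4 (by decide), sw 2 4 (by decide), sw 3 4 (by decide), sw 0 5 (by decide), sw 1 5 (by decide), sw 2 5 (by decide), sw 3 5 (by decide), sw 4 5 (by decide), sw 0 6 (by decide), sw 1 6 (by decide), sw 2 6 (by decide), sw 3 6 (by decide), sw 4 6 (by decide), sw 5 6 (by decide), sw 0 7 (by decide), sw 1 7 (by decide), sw 2 7 (by decide), sw 3 7 (by decide), sw 4 7 (by decide), sw 5 7 (by decide), sw 6 7 (by decide), sw2 0 1 (by decide), sw2 0 2 (by decide), sw2 1 2 (by decide), sw2 0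 3 (by decide), sw2 1 3 (by decide), sw2 2 3 (by decide), sw2 0 4 (by decide), sw2 1 4 (by decide), sw2 2 4 (by decide), sw2 3 4 (by decide), sw2 0 5 (by decide), sw2 1 5 (by decide), sw2 2 5 (by decide), sw2 3 5 (by decide), sw2 4 5 (by decide), sw2 0 6 (by decide), sw2 1 6 (by decide), sw2 2 6 (by decide), sw2 3 6 (by decide), sw2 4 6 (by decide), sw2 5 6 (by decide), sw2 0 7 (by decide), sw2 1 7 (by decide), sw2 2 7 (by decide), sw2 3 7 (by decide), sw2 4 7 (by decide), sw2 5 7 (by decide), sw2 6 7 (by decide), sq, sq2, mul_neg, neg_mul, neg_neg, mul_one, one_mul, mul_assoc]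
  have hP2pt : ∀ x, P (P x) = x := by
    intro x
    have := LinearMap.ext_iff.mp hP2 x
    simpa using this
  -- P anticommutes with every J i
  have a0 : P * J 0 = -(J 0 * P) := by
    rw [hP']
    simp only [sw 0 1 (by decide), sw 0 2 (by decide), sw 1 2 (by decide), sw 0 3 (by decide), sw 1 3 (by decide), sw 2 3 (by decide), sw 0 4 (by decide), sw 1 4 (by decide), sw 2 4 (by decide), sw 3 4 (by decide), sw 0 5 (by decide), sw 1 5 (by decide), sw 2 5 (by decide), sw 3 5 (by decide), sw 4 5 (by decide), sw 0 6 (by decide), sw 1 6 (by decide), sw 2 6 (by decide), sw 3 6 (by decide), sw 4 6 (by decide), sw 5 6 (by decide), sw 0 7 (by decide), sw 1 7 (by decide), sw 2 7 (by decide), sw 3 7 (by decide), sw 4 7 (by decide), sw 5 7 (by decide), sw 6 7 (by decide), sw2 0 1 (by decide), sw2 0 2 (by decide), sw2 1 2 (by decide), sw2 0 3 (by decide), sw2 1 3 (by decide), sw2 2 3 (by decide), sw2 0 4 (by decide), sw2 1 4 (by decide), sw2 2 4 (by decide), sw2 3 4 (by decide), sw2 0 5 (by decide), sw2 1 5 (by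 decide), sw2 2 5 (by decide), sw2 3 5 (by decide), sw2 4 5 (by decide), sw2 0 6 (by decide), sw2 1 6 (by decide), sw2 2 6 (by decide), sw2 3 6 (by decide), sw2 4 6 (by decide), sw2 5 6 (by decide), sw2 0 7 (by decide), sw2 1 7 (by decide), sw2 2 7 (by decide), sw2 3 7 (by decide), sw2 4 7 (by decide), sw2 5 7 (by decide), sw2 6 7 (by decide), sq, sq2, mul_neg, neg_mul, neg_neg, mul_one, one_mul, mul_assoc]
  have a1 : P * J 1 = -(J 1 * P) := by
    rw [hP']
    simp only [sw 0 1 (by decide), sw 0 2 (by decide), sw 1 2 (by decide), sw 0 3 (by decide), sw 1 3 (by decide), sw 2 3 (by decide), sw 0 4 (by decide), sw 1 4 (by decide), sw 2 4 (by decide), sw 3 4 (by decide), sw 0 5 (by decide), sw 1 5 (by decide), sw 2 5 (by decide), sw 3 5 (by decide), sw 4 5 (by decide), sw 0 6 (by decide), sw 1 6 (by decide), sw 2 6 (by decide), sw 3 6 (by decide), sw 4 6 (by decide), sw 5 6 (by decide), sw 0 7 (by decide), sw 1 7 (by decide), sw 2 7 (by decide), sw 3 7 (by decide), sw 4 7 (by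 decide), sw 5 7 (by decide), sw 6 7 (by decide), sw2 0 1 (by decide), sw2 0 2 (by decide), sw2 1 2 (by decide), sw2 0 3 (by decide), sw2 1 3 (by decide), sw2 2 3 (by decide), sw2 0 4 (by decide), sw2 1 4 (by decide), sw2 2 4 (by decide), sw2 3 4 (by decide), sw2 0 5 (by decide), sw2 1 5 (by decide), sw2 2 5 (by decide), sw2 3 5 (by decide), sw2 4 5 (by decide), sw2 0 6 (by decide), sw2 1 6 (by decide), sw2 2 6 (by decide), sw2 3 6 (by decide), sw2 4 6 (by decide), sw2 5 6 (by decide), sw2 0 7 (by decide), sw2 1 7 (by decide), sw2 2 7 (by decide), sw2 3 7 (by decide), sw2 4 7 (by decide), sw2 5 7 (by decide), sw2 6 7 (by decide), sq, sq2, mul_neg, neg_mul, neg_neg, mul_one, one_mul, mul_assoc]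
  have a2 : P * J 2 = -(J 2 * P) := by
    rw [hP']
    simp only [sw 0 1 (by decide), sw 0 2 (by decide), sw 1 2 (by decide), sw 0 3 (by decide), sw 1 3 (by decide), sw 2 3 (by decide), sw 0 4 (by decide), sw 1 4 (by decide), sw 2 4 (by decide), sw 3 4 (by decide), sw 0 5 (by decide), sw 1 5 (by decide), sw 2 5 (by decide), sw 3 5 (by decide), sw 4 5 (by decide), sw 0 6 (by decide), sw 1 6 (by decide), sw 2 6 (by decide), sw 3 6 (by decide), sw 4 6 (by decide), sw 5 6 (by decide), sw 0 7 (by decide), sw 1 7 (by decide), sw 2 7 (by decide), sw 3 7 (by decide), sw 4 7 (by decide), sw 5 7 (by decide), sw 6 7 (by decide), sw2 0 1 (by decide), sw2 0 2 (by decide), sw2 1 2 (by decide), sw2 0 3 (by decide), sw2 1 3 (by decide), sw2 2 3 (by decide), sw2 0 4 (by decide), sw2 1 4 (by decide), sw2 2 4 (by decide), sw2 3 4 (by decide), sw2 0 5 (by decide), sw2 1 5 (by decide), sw2 2 5 (by decide), sw2 3 5 (by decide), sw2 4 5 (by decide), sw2 0 6 (by decide), sw2 1 6 (by decide), sw2 2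 6 (by decide), sw2 3 6 (by decide), sw2 4 6 (by decide), sw2 5 6 (by decide), sw2 0 7 (by decide), sw2 1 7 (by decide), sw2 2 7 (by decide), sw2 3 7 (by decide), sw2 4 7 (by decide), sw2 5 7 (by decide), sw2 6 7 (by decide), sq, sq2, mul_neg, neg_mul, neg_neg, mul_one, one_mul, mul_assoc]
  have a3 : P * J 3 = -(J 3 * P) := by
    rw [hP']
    simp only [sw 0 1 (by decide), sw 0 2 (by decide), sw 1 2 (by decide), sw 0 3 (by decide), sw 1 3 (by decide), sw 2 3 (by decide), sw 0 4 (by decide), sw 1 4 (by decide), sw 2 4 (by decide), sw 3 4 (by decide), sw 0 5 (by decide), sw 1 5 (by decide), sw 2 5 (by decide), sw 3 5 (by decide), sw 4 5 (by decide), sw 0 6 (by decide), sw 1 6 (by decide), sw 2 6 (by decide), sw 3 6 (by decide), sw 4 6 (by decide), sw 5 6 (by decide), sw 0 7 (by decide), sw 1 7 (by decide), sw 2 7 (by decide), sw 3 7 (by decide), sw 4 7 (by decide), sw 5 7 (by decide), sw 6 7 (by decide), sw2 0 1 (by decide), sw2 0 2 (by decide), sw2 1 2 (by decide), sw2 0 3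 (by decide), sw2 1 3 (by decide), sw2 2 3 (by decide), sw2 0 4 (by decide), sw2 1 4 (by decide), sw2 2 4 (by decide), sw2 3 4 (by decide), sw2 0 5 (by decide), sw2 1 5 (by decide), sw2 2 5 (by decide), sw2 3 5 (by decide), sw2 4 5 (by decide), sw2 0 6 (by decide), sw2 1 6 (by decide), sw2 2 6 (by decide), sw2 3 6 (by decide), sw2 4 6 (by decide), sw2 5 6 (by decide), sw2 0 7 (by decide), sw2 1 7 (by decide), sw2 2 7 (by decide), sw2 3 7 (by decide), sw2 4 7 (by decide), sw2 5 7 (by decide), sw2 6 7 (by decide), sq, sq2, mul_neg, neg_mul, neg_neg, mul_one, one_mul, mul_assoc]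
  have a4 : P * J 4 = -(J 4 * P) := by
    rw [hP']
    simp only [sw 0 1 (by decide), sw 0 2 (by decide), sw 1 2 (by decide), sw 0 3 (by decide), sw 1 3 (by decide), sw 2 3 (by decide), sw 0 4 (by decide), sw 1 4 (by decide), sw 2 4 (by decide), sw 3 4 (by decide), sw 0 5 (by decide), sw 1 5 (by decide), sw 2 5 (by decide), sw 3 5 (by decide), sw 4 5 (by decide), sw 0 6 (by decide), sw 1 6 (by decide), sw 2 6 (by decide), sw 3 6 (by decide), sw 4 6 (by decide), sw 5 6 (by decide), sw 0 7 (by decide), sw 1 7 (by decide), sw 2 7 (by decide), sw 3 7 (by decide), sw 4 7 (by decide), sw 5 7 (by decide), sw 6 7 (by decide), sw2 0 1 (by decide), sw2 0 2 (by decide), sw2 1 2 (by decide), sw2 0 3 (by decide), sw2 1 3 (by decide), sw2 2 3 (by decide), sw2 0 4 (by decide), sw2 1 4 (by decide), sw2 2 4 (by decide), sw2 3 4 (by decide), sw2 0 5 (by decide), sw2 1 5 (by decide), sw2 2 5 (by decide), sw2 3 5 (by decide), sw2 4 5 (by decide), sw2 0 6 (by decide), sw2 1 6 (by decide), sw2 2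 6 (by decide), sw2 3 6 (by decide), sw2 4 6 (by decide), sw2 5 6 (by decide), sw2 0 7 (by decide), sw2 1 7 (by decide), sw2 2 7 (by decide), sw2 3 7 (by decide), sw2 4 7 (by decide), sw2 5 7 (by decide), sw2 6 7 (by decide), sq, sq2, mul_neg, neg_mul, neg_neg, mul_one, one_mul, mul_assoc]
  have a5 : P * J 5 = -(J 5 * P) := by
    rw [hP']
    simp only [sw 0 1 (by decide), sw 0 2 (by decide), sw 1 2 (by decide), sw 0 3 (by decide), sw 1 3 (by decide), sw 2 3 (by decide), sw 0 4 (by decide), sw 1 4 (by decide), sw 2 4 (by decide), sw 3 4 (by decide), sw 0 5 (by decide), sw 1 5 (by decide), sw 2 5 (by decide), sw 3 5 (by decide), sw 4 5 (by decide), sw 0 6 (by decide), sw 1 6 (by decide), sw 2 6 (by decide), sw 3 6 (by decide), sw 4 6 (by decide), sw 5 6 (by decide), sw 0 7 (by decide), sw 1 7 (by decide), sw 2 7 (by decide), sw 3 7 (by decide), sw 4 7 (by decide), sw 5 7 (by decide), sw 6 7 (by decide), sw2 0 1 (by decide), sw2 0 2 (by decide), sw2 1 2 (by decide), sw2 0 3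 (by decide), sw2 1 3 (by decide), sw2 2 3 (by decide), sw2 0 4 (by decide), sw2 1 4 (by decide), sw2 2 4 (by decide), sw2 3 4 (by decide), sw2 0 5 (by decide), sw2 1 5 (by decide), sw2 2 5 (by decide), sw2 3 5 (by decide), sw2 4 5 (by decide), sw2 0 6 (by decide), sw2 1 6 (by decide), sw2 2 6 (by decide), sw2 3 6 (by decide), sw2 4 6 (by decide), sw2 5 6 (by decide), sw2 0 7 (by decide), sw2 1 7 (by decide), sw2 2 7 (by decide), sw2 3 7 (by decide), sw2 4 7 (by decide), sw2 5 7 (by decide), sw2 6 7 (by decide), sq, sq2, mul_neg, neg_mul, neg_neg, mul_one, one_mul, mul_assoc]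
  have a6 : P * J 6 = -(J 6 * P) := by
    rw [hP']
    simp only [sw 0 1 (by decide), sw 0 2 (by decide), sw 1 2 (by decide), sw 0 3 (by decide), sw 1 3 (by decide), sw 2 3 (by decide), sw 0 4 (by decide), sw 1 4 (by decide), sw 2 4 (by decide), sw 3 4 (by decide), sw 0 5 (by decide), sw 1 5 (by decide), sw 2 5 (by decide), sw 3 5 (by decide), sw 4 5 (by decide), sw 0 6 (by decide), sw 1 6 (by decide), sw 2 6 (by decide), sw 3 6 (by decide), sw 4 6 (by decide), sw 5 6 (by decide), sw 0 7 (by decide), sw 1 7 (by decide), sw 2 7 (by decide), sw 3 7 (by decide), sw 4 7 (by decide), sw 5 7 (by decide), sw 6 7 (by decide), sw2 0 1 (by decide), sw2 0 2 (by decide), sw2 1 2 (by decide), sw2 0 3 (by decide), sw2 1 3 (by decide), sw2 2 3 (by decide), sw2 0 4 (by decide), sw2 1 4 (by decide), sw2 2 4 (by decide), sw2 3 4 (by decide), sw2 0 5 (by decide), sw2 1 5 (by decide), sw2 2 5 (by decide), sw2 3 5 (by decide), sw2 4 5 (by decide), sw2 0 6 (by decide), sw2 1 6 (by decide), sw2 2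 6 (by decide), sw2 3 6 (by decide), sw2 4 6 (by decide), sw2 5 6 (by decide), sw2 0 7 (by decide), sw2 1 7 (by decide), sw2 2 7 (by decide), sw2 3 7 (by decide), sw2 4 7 (by decide), sw2 5 7 (by decide), sw2 6 7 (by decide), sq, sq2, mul_neg, neg_mul, neg_neg, mul_one, one_mul, mul_assoc]
  have a7 : P * J 7 = -(J 7 * P) := by
    rw [hP']
    simp only [sw 0 1 (by decide), sw 0 2 (by decide), sw 1 2 (by decide), sw 0 3 (by decide), sw 1 3 (by decide), sw 2 3 (by decide), sw 0 4 (by decide), sw 1 4 (by decide), sw 2 4 (by decide), sw 3 4 (by decide), sw 0 5 (by decide), sw 1 5 (by decide), sw 2 5 (by decide), sw 3 5 (by decide), sw 4 5 (by decide), sw 0 6 (by decide), sw 1 6 (by decide), sw 2 6 (by decide), sw 3 6 (by decide), sw 4 6 (by decide), sw 5 6 (by decide), sw 0 7 (by decide), sw 1 7 (by decide), sw 2 7 (by decide), sw 3 7 (by decide), sw 4 7 (by decide), sw 5 7 (by decide), sw 6 7 (by decide), sw2 0 1 (by decide), sw2 0 2 (by decide), sw2 1 2 (by decide), sw2 0 3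 (by decide), sw2 1 3 (by decide), sw2 2 3 (by decide), sw2 0 4 (by decide), sw2 1 4 (by decide), sw2 2 4 (by decide), sw2 3 4 (by decide), sw2 0 5 (by decide), sw2 1 5 (by decide), sw2 2 5 (by decide), sw2 3 5 (by decide), sw2 4 5 (by decide), sw2 0 6 (by decide), sw2 1 6 (by decide), sw2 2 6 (by decide), sw2 3 6 (by decide), sw2 4 6 (by decide), sw2 5 6 (by decide), sw2 0 7 (by decide), sw2 1 7 (by decide), sw2 2 7 (by decide), sw2 3 7 (by decide), sw2 4 7 (by decide), sw2 5 7 (by decide), sw2 6 7 (by decide), sq, sq2, mul_neg, neg_mul, neg_neg, mul_one, one_mul, mul_assoc]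
  have hPJ : ∀ i, P * J i = -(J i * P) := by
    intro i
    fin_cases i
    · exact a0
    · exact a1
    · exact a2
    · exact a3
    · exact a4
    · exact a5
    · exact a6
    · exact a7
  have hPJpt : ∀ (i : Fin 8) x, P (J i x) = -(J i (P x)) := by
    intro i x
    have := LinearMap.ext_iff.mp (hPJ i) x
    simpa using this
  -- injectivity of each J i
  have hsqpt : ∀ (i : Fin 8) x, J i (J i x) = -x := by
    intro i x
    have := LinearMap.ext_iff.mp (sq2 i) x
    simpa using this
  have hinj : ∀ i, Function.Injective (J i) := by
    intro i x y h
    have : -x = -y := by rw [← hsqpt i x, ← hsqpt i y, h]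
    exact neg_injective this
  -- adjoint of P
  have hadj : LinearMap.adjoint P = P := by
    conv_lhs => rw [hP']
    simp only [Module.End.mul_eq_comp]
    simp only [LinearMap.adjoint_comp, hskew, LinearMap.comp_neg, LinearMap.neg_comp, neg_neg]
    simp only [← Module.End.mul_eq_comp]
    rw [hP']
    simp only [sw 0 1 (by decide), sw 0 2 (by decide), sw 1 2 (by decide), sw 0 3 (by decide), sw 1 3 (by decide), sw 2 3 (by decide), sw 0 4 (by decide), sw 1 4 (by decide), sw 2 4 (by decide), sw 3 4 (by decide), sw 0 5 (by decide), sw 1 5 (by decide), sw 2 5 (by decide), sw 3 5 (by decide), sw 4 5 (by decide), sw 0 6 (by decide), sw 1 6 (by decide), sw 2 6 (by decide), sw 3 6 (by decide), sw 4 6 (by decide), sw 5 6 (by decide), sw 0 7 (by decide), sw 1 7 (by decide), sw 2 7 (by decide), sw 3 7 (by decide), sw 4 7 (by decide), sw 5 7 (by decide), sw 6 7 (by decide), sw2 0 1 (by decide), sw2 0 2 (by decide), sw2 1 2 (by decide), sw2 0 3 (by decide), sw2 1 3 (by decide), sw2 2 3 (by decide), sw2 0 4 (by decide), sw2 1 4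 (by decide), sw2 2 4 (by decide), sw2 3 4 (by decide), sw2 0 5 (by decide), sw2 1 5 (by decide), sw2 2 5 (by decide), sw2 3 5 (by decide), sw2 4 5 (by decide), sw2 0 6 (by decide), sw2 1 6 (by decide), sw2 2 6 (by decide), sw2 3 6 (by decide), sw2 4 6 (by decide), sw2 5 6 (by decide), sw2 0 7 (by decide), sw2 1 7 (by decide), sw2 2 7 (by decide), sw2 3 7 (by decide), sw2 4 7 (by decide), sw2 5 7 (by decide), sw2 6 7 (by decide), sq, sq2, mul_neg, neg_mul, neg_neg, mul_one, one_mul, mul_assoc]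
  -- eigenspace swapping
  have hswapmap : ∀ (i : Fin 8) (μ : ℝ),
      Submodule.map (J i) (Module.End.eigenspace P μ) = Module.End.eigenspace P (-μ) := by
    intro i μ
    apply le_antisymm
    · rintro _ ⟨x, hx, rfl⟩
      have hx' : P x = μ • x := Module.End.mem_eigenspace_iff.mp hx
      rw [Module.End.mem_eigenspace_iff]
      rw [hPJpt i x, hx', map_smul, neg_smul]
    · intro y hy
      have hy' : P y = (-μ) • y := Module.End.mem_eigenspace_iff.mp hy
      have h1 : J i y ∈ Module.End.eigenspace P μ := by
        rw [Module.End.mem_eigenspace_iff, hPJpt i y, hy', map_smul, neg_smul, neg_neg]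
      refine ⟨-(J i y), Submodule.neg_mem _ h1, ?_⟩
      rw [map_neg, hsqpt i y, neg_neg]
  have hm1 : ∀ i, Submodule.map (J i) (Module.End.eigenspace P 1) = Module.End.eigenspace P (-1) := by
    intro i
    simpa using hswapmap i 1
  have hm2 : ∀ i, Submodule.map (J i) (Module.End.eigenspace P (-1)) = Module.End.eigenspace P 1 := by
    intro i
    have := hswapmap i (-1)
    rwa [neg_neg] at this
  -- dimensions
  have hdimeq : Module.finrank ℝ (Module.End.eigenspace P 1)
      = Module.finrank ℝ (Module.End.eigenspace P (-1)) := by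
    rw [← hm1 0]
    exact (Submodule.equivMapOfInjective (J 0) (hinj 0) _).finrank_eq
  have hsup : Module.End.eigenspace P 1 ⊔ Module.End.eigenspace P (-1) = ⊤ := by
    rw [eq_top_iff]
    intro x _
    have hx1 : (2⁻¹ : ℝ) • (x + P x) ∈ Module.End.eigenspace P 1 := by
      apply Submodule.smul_mem
      rw [Module.End.mem_eigenspace_iff, one_smul, map_add, hP2pt, add_comm]
    have hx2 : (2⁻¹ : ℝ) • (x - P x) ∈ Module.End.eigenspace P (-1) := by
      apply Submodule.smul_mem
      rw [Module.End.mem_eigenspace_iff, map_sub, hP2pt]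
      rw [neg_smul, one_smul, neg_sub]
    have := Submodule.add_mem_sup hx1 hx2
    have hxx : (2⁻¹ : ℝ) • (x + P x) + (2⁻¹ : ℝ) • (x - P x) = x := by
      rw [← smul_add]
      rw [show (x + P x + (x - P x)) = (2:ℝ) • x by rw [two_smul]; abel]
      rw [smul_smul]
      norm_num
    rwa [hxx] at this
  have hinf : Module.End.eigenspace P 1 ⊓ Module.End.eigenspace P (-1) = ⊥ := by
    rw [eq_bot_iff]
    intro x hx
    have h1 : P x = (1:ℝ) • x := Module.End.mem_eigenspace_iff.mp hx.1
    have h2 : P x = (-1:ℝ) • x := Module.End.mem_eigenspace_iff.mp hx.2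
    rw [one_smul] at h1
    rw [h1, neg_smul, one_smul] at h2
    have h3 : x + x = 0 := by
      nth_rewrite 2 [h2]
      exact add_neg_cancel x
    have h4 : (2:ℝ) • x = 0 := by rw [two_smul]; exact h3
    have : x = 0 := by
      rcases smul_eq_zero.mp h4 with h | h
      · norm_num at h
      · exact h
    simpa [Submodule.mem_bot] using this
  have hsum : Module.finrank ℝ (Module.End.eigenspace P 1)
      + Module.finrank ℝ (Module.End.eigenspace P (-1)) = 16 := by
    have h := Submodule.finrank_sup_add_finrank_inf_eq
      (Module.End.eigenspace P 1) (Module.End.eigenspace P (-1))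
    rw [hsup, hinf, finrank_bot, finrank_top, add_zero] at h
    rw [← h]
    simp [finrank_euclideanSpace]
  refine ⟨hadj, ?_, ?_, ?_, ?_, ?_, fun i => ⟨hm1 i, hm2 i⟩⟩
  · intro x y
    calc (inner ℝ (P x) (P y) : ℝ) = inner ℝ (LinearMap.adjoint P x) (P y) := by rw [hadj]
    _ = inner ℝ x (P (P y)) := LinearMap.adjoint_inner_left P (P y) x
    _ = inner ℝ x y := by rw [hP2pt]
  · -- trace
    have key : J 0 * (P * J 0) = P := by
      rw [hP']
      simp only [sw 0 1 (by decide), sw 0 2 (by decide), sw 1 2 (by decide), sw 0 3 (by decide), sw 1 3 (by decide), sw 2 3 (by decide), sw 0 4 (by decide), sw 1 4 (by decide), sw 2 4 (by decide), sw 3 4 (by decide), sw 0 5 (by decide), sw 1 5 (by decide), sw 2 5 (by decide), sw 3 5 (by decide), sw 4 5 (by decide), sw 0 6 (by decide), sw 1 6 (by decide), sw 2 6 (by decide), sw 3 6 (by decide), sw 4 6 (by decide), sw 5 6 (by decide), sw 0 7 (by decide), sw 1 7 (by decide), sw 2 7 (by decide), sw 3 7 (by decide), sw 4 7 (by decide),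 sw 5 7 (by decide), sw 6 7 (by decide), sw2 0 1 (by decide), sw2 0 2 (by decide), sw2 1 2 (by decide), sw2 0 3 (by decide), sw2 1 3 (by decide), sw2 2 3 (by decide), sw2 0 4 (by decide), sw2 1 4 (by decide), sw2 2 4 (by decide), sw2 3 4 (by decide), sw2 0 5 (by decide), sw2 1 5 (by decide), sw2 2 5 (by decide), sw2 3 5 (by decide), sw2 4 5 (by decide), sw2 0 6 (by decide), sw2 1 6 (by decide), sw2 2 6 (by decide), sw2 3 6 (by decide), sw2 4 6 (by decide), sw2 5 6 (by decide), sw2 0 7 (by decide), sw2 1 7 (by decide), sw2 2 7 (by decide), sw2 3 7 (by decide), sw2 4 7 (by decide), sw2 5 7 (by decide), sw2 6 7 (by decide), sq, sq2, mul_neg, neg_mul, neg_neg, mul_one, one_mul, mul_assoc]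
    have h1 : LinearMap.trace ℝ E16 P = - LinearMap.trace ℝ E16 P := by
      conv_lhs => rw [← key]
      rw [LinearMap.trace_mul_comm, mul_assoc, sq2, mul_neg_one, map_neg]
    linarith
  · intro μ hμ
    obtain ⟨x, hxm, hx0⟩ := hμ.exists_hasEigenvector
    have hx : P x = μ • x := Module.End.mem_eigenspace_iff.mp hxm
    have h1 : (μ * μ) • x = x := by
      rw [mul_smul, ← hx, ← map_smul, ← hx, hP2pt]
    have h2 : (μ * μ - 1) • x = 0 := by
      rw [sub_smul, one_smul, h1, sub_self]
    have h3 : μ * μ - 1 = 0 := by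
      rcases smul_eq_zero.mp h2 with h | h
      · exact h
      · exact absurd h hx0
    have : μ * μ = 1 := by linarith
    exact mul_self_eq_one_iff.mp this
  · omega
  · omega
end

section
/- Let S_0, …, S_8 be a Cl⁺(9)-system on ℝ^16. Then there do not exist two nonzero subspaces E_1, E_2 ⊂ ℝ^16 with ℝ^16 = E_1 ⊕ E_2 and E_1 orthogonal to E_2, such that Σ_{i=0}^{8} (⟨S_iX, Z⟩S_iY − ⟨S_iY, Z⟩S_iX) = 0 for all X, Y ∈ E_α and Z ∈ E_β with α ≠ β (α, β ∈ {1, 2}). -/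
open RealInnerProductSpace Finset


section helpers
variable (S : Fin 9 → (E16 →ₗ[ℝ] E16))

lemma sAdj (hsymm : ∀ i, LinearMap.adjoint (S i) = S i) (i : Fin 9) (x y : E16) :
    ⟪S i x, y⟫ = ⟪x, S i y⟫ := by
  conv_lhs => rw [← hsymm i]
  exact LinearMap.adjoint_inner_left _ _ _

lemma clApp (hcl : ∀ i j, S i * S j + S j * S i =
      if i = j then (2 : ℝ) • (1 : E16 →ₗ[ℝ] E16) else 0) (i j : Fin 9) (y : E16) :
    S i (S j y) + S j (S i y) = if i = j then (2:ℝ) • y else 0 := by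
  have := congrArg (fun (T : E16 →ₗ[ℝ] E16) => T y) (hcl i j)
  simp only [LinearMap.add_apply, Module.End.mul_apply] at this
  split_ifs with h <;> simp_all

lemma F1 (hsymm : ∀ i, LinearMap.adjoint (S i) = S i)
    (hcl : ∀ i j, S i * S j + S j * S i =
      if i = j then (2 : ℝ) • (1 : E16 →ₗ[ℝ] E16) else 0) (i j : Fin 9) (x y : E16) :
    ⟪S i x, S j y⟫ + ⟪S j x, S i y⟫ = if i = j then 2 * ⟪x, y⟫ else 0 := by
  rw [sAdj S hsymm, sAdj S hsymm, ← inner_add_right, clApp S hcl]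
  split_ifs with h
  · rw [real_inner_smul_right]
  · rw [inner_zero_right]

lemma F2 (hsymm : ∀ i, LinearMap.adjoint (S i) = S i)
    (hcl : ∀ i j, S i * S j + S j * S i =
      if i = j then (2 : ℝ) • (1 : E16 →ₗ[ℝ] E16) else 0) (i j : Fin 9) (y : E16) :
    ⟪S i y, S j y⟫ = if i = j then ⟪y, y⟫ else 0 := by
  have h := F1 S hsymm hcl i j y y
  have hc : ⟪S i y, S j y⟫ = ⟪S j y, S i y⟫ := real_inner_comm _ _
  split_ifs at h ⊢ with hh <;> linarith

end helpers

section keys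
variable (S : Fin 9 → (E16 →ₗ[ℝ] E16))

lemma keyIII (X Y Z : E16)
    (hC : ∑ i, (⟪S i X, Z⟫ • S i Y - ⟪S i Y, Z⟫ • S i X) = 0) (W : E16) :
    ∑ i, ⟪S i X, Z⟫ * ⟪S i Y, W⟫ = ∑ i, ⟪S i Y, Z⟫ * ⟪S i X, W⟫ := by
  have h := congrArg (fun v : E16 => ⟪v, W⟫) hC
  simp only [inner_zero_left] at h
  rw [sum_inner] at h
  simp only [inner_sub_left, real_inner_smul_left, Finset.sum_sub_distrib] at h
  linarith [h]

lemma keyI (hsymm : ∀ i, LinearMap.adjoint (S i) = S i)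
    (hcl : ∀ i j, S i * S j + S j * S i =
      if i = j then (2 : ℝ) • (1 : E16 →ₗ[ℝ] E16) else 0) (X Y Z : E16)
    (hC : ∑ i, (⟪S i X, Z⟫ • S i Y - ⟪S i Y, Z⟫ • S i X) = 0) :
    ⟪Y, Y⟫ * (∑ i, ⟪S i X, Z⟫ * ⟪S i Y, Z⟫)
      = (∑ i, ⟪S i Y, Z⟫ * ⟪S i Y, Z⟫) * ⟪X, Y⟫ := by
  set bb : Fin 9 → ℝ := fun i => ⟪S i Y, Z⟫ with hbb
  have step1 : ∀ j, ⟪S j X, Z⟫ * ⟪Y, Y⟫ = ∑ i, bb i * ⟪S i X, S j Y⟫ := by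
    intro j
    have h := congrArg (fun v : E16 => ⟪v, S j Y⟫) hC
    simp only [inner_zero_left] at h
    rw [sum_inner] at h
    simp only [inner_sub_left, real_inner_smul_left, Finset.sum_sub_distrib] at h
    have h2 : ∑ i, ⟪S i X, Z⟫ * ⟪S i Y, S j Y⟫ = ⟪S j X, Z⟫ * ⟪Y, Y⟫ := by
      have : ∀ i, ⟪S i X, Z⟫ * ⟪S i Y, S j Y⟫
          = if i = j then ⟪S i X, Z⟫ * ⟪Y, Y⟫ else 0 := by
        intro i
        rw [F2 S hsymm hcl i j Y]
        split_ifs <;> simp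
      rw [Finset.sum_congr rfl fun i _ => this i, Finset.sum_ite_eq' Finset.univ j
        (fun i => ⟪S i X, Z⟫ * ⟪Y, Y⟫)]
      simp
    rw [h2] at h
    rw [← sub_eq_zero]
    rw [sub_eq_zero] at h
    rw [h]
    ring_nf
    exact sub_self _
  -- multiply by bb j and sum over j
  have step2 : ⟪Y, Y⟫ * (∑ j, ⟪S j X, Z⟫ * bb j)
      = ∑ j, ∑ i, (bb i * bb j) * ⟪S i X, S j Y⟫ := by
    rw [Finset.mul_sum]
    apply Finset.sum_congr rfl
    intro j _
    calc ⟪Y, Y⟫ * (⟪S j X, Z⟫ * bb j) = bb j * (⟪S j X, Z⟫ * ⟪Y, Y⟫) := by ring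
    _ = bb j * ∑ i, bb i * ⟪S i X, S j Y⟫ := by rw [step1 j]
    _ = ∑ i, bb i * bb j * ⟪S i X, S j Y⟫ := by
        rw [Finset.mul_sum]
        exact Finset.sum_congr rfl fun i _ => by ring
  -- double counting of R
  have hcomm : ∑ j, ∑ i, (bb i * bb j) * ⟪S i X, S j Y⟫
      = ∑ j, ∑ i, (bb i * bb j) * ⟪S j X, S i Y⟫ := by
    rw [Finset.sum_comm]
    exact Finset.sum_congr rfl fun i _ => Finset.sum_congr rfl fun j _ => by ring
  have hR2 : (∑ j, ∑ i, (bb i * bb j) * ⟪S i X, S j Y⟫) * 2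
      = (∑ j, bb j * bb j) * (2 * ⟪X, Y⟫) := by
    have e1 : ∀ j i : Fin 9, (bb i * bb j) * ⟪S i X, S j Y⟫ + (bb i * bb j) * ⟪S j X, S i Y⟫
        = if i = j then (bb i * bb j) * (2 * ⟪X, Y⟫) else 0 := by
      intro j i
      rw [← mul_add, F1 S hsymm hcl i j X Y]
      split_ifs <;> simp
    calc (∑ j, ∑ i, (bb i * bb j) * ⟪S i X, S j Y⟫) * 2
        = (∑ j, ∑ i, (bb i * bb j) * ⟪S i X, S j Y⟫)
          + (∑ j, ∑ i, (bb i * bb j) * ⟪S j X, S i Y⟫) := by rw [← hcomm]; ring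
      _ = ∑ j, ∑ i, ((bb i * bb j) * ⟪S i X, S j Y⟫ + (bb i * bb j) * ⟪S j X, S i Y⟫) := by
          rw [← Finset.sum_add_distrib]
          exact Finset.sum_congr rfl fun j _ => by rw [← Finset.sum_add_distrib]
      _ = ∑ j, ∑ i, (if i = j then (bb i * bb j) * (2 * ⟪X, Y⟫) else 0) := by
          exact Finset.sum_congr rfl fun j _ => Finset.sum_congr rfl fun i _ => e1 j i
      _ = ∑ j, (bb j * bb j) * (2 * ⟪X, Y⟫) := by
          exact Finset.sum_congr rfl fun j _ => by
            rw [Finset.sum_ite_eq' Finset.univ j (fun i => (bb i * bb j) * (2 * ⟪X, Y⟫))]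
            simp
      _ = (∑ j, bb j * bb j) * (2 * ⟪X, Y⟫) := by rw [Finset.sum_mul]
  have hgoal : ⟪Y, Y⟫ * (∑ j, ⟪S j X, Z⟫ * bb j) * 2
      = (∑ j, bb j * bb j) * (2 * ⟪X, Y⟫) := by rw [step2]; exact hR2
  have : ∑ i, ⟪S i X, Z⟫ * ⟪S i Y, Z⟫ = ∑ j, ⟪S j X, Z⟫ * bb j := rfl
  rw [this]
  nlinarith [hgoal]

lemma orthA (hsymm : ∀ i, LinearMap.adjoint (S i) = S i)
    (hcl : ∀ i j, S i * S j + S j * S i =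
      if i = j then (2 : ℝ) • (1 : E16 →ₗ[ℝ] E16) else 0)
    (X Y Z : E16)
    (hC : ∑ i, (⟪S i X, Z⟫ • S i Y - ⟪S i Y, Z⟫ • S i X) = 0)
    (hYu : ⟪Y, Y⟫ = 1) (hXY : ⟪X, Y⟫ = 0) :
    ∑ i, ⟪S i X, Z⟫ * ⟪S i Y, Z⟫ = 0 := by
  have k1 := keyI S hsymm hcl X Y Z hC
  rw [hYu, one_mul, hXY, mul_zero] at k1
  exact k1

lemma conf (hsymm : ∀ i, LinearMap.adjoint (S i) = S i)
    (hcl : ∀ i j, S i * S j + S j * S i =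
      if i = j then (2 : ℝ) • (1 : E16 →ₗ[ℝ] E16) else 0)
    (F G : Submodule ℝ E16)
    (hc : ∀ X ∈ F, ∀ Y ∈ F, ∀ Z ∈ G,
      ∑ i, (⟪S i X, Z⟫ • S i Y - ⟪S i Y, Z⟫ • S i X) = 0)
    (X Y Z : E16) (hX : X ∈ F) (hY : Y ∈ F) (hZ : Z ∈ G)
    (hXu : ⟪X, X⟫ = 1) (hYu : ⟪Y, Y⟫ = 1) :
    ∑ i, ⟪S i X, Z⟫ * ⟪S i X, Z⟫ = ∑ i, ⟪S i Y, Z⟫ * ⟪S i Y, Z⟫ := by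
  have hyx : ⟪Y, X⟫ = ⟪X, Y⟫ := real_inner_comm _ _
  have hsymsum : ∑ i, ⟪S i Y, Z⟫ * ⟪S i X, Z⟫ = ∑ i, ⟪S i X, Z⟫ * ⟪S i Y, Z⟫ :=
    Finset.sum_congr rfl fun i _ => mul_comm _ _
  by_cases h : ⟪X, Y⟫ = 0
  · -- go through the midpoint M = X + Y
    have hM : X + Y ∈ F := add_mem hX hY
    have hMM : ⟪X + Y, X + Y⟫ = 2 := by
      rw [real_inner_add_add_self, hXu, hYu, h]; ring
    have hXM : ⟪X, X + Y⟫ = 1 := by rw [inner_add_right, hXu, h]; ring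
    have hYM : ⟪Y, X + Y⟫ = 1 := by rw [inner_add_right, hYu, hyx, h]; ring
    have hexp : ∀ i, ⟪S i (X + Y), Z⟫ = ⟪S i X, Z⟫ + ⟪S i Y, Z⟫ := by
      intro i; rw [map_add, inner_add_left]
    have hip0 : ∑ i, ⟪S i X, Z⟫ * ⟪S i Y, Z⟫ = 0 :=
      orthA S hsymm hcl X Y Z (hc X hX Y hY Z hZ) hYu h
    have hipXM : ∑ i, ⟪S i X, Z⟫ * ⟪S i (X + Y), Z⟫
        = ∑ i, ⟪S i X, Z⟫ * ⟪S i X, Z⟫ := by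
      have : ∀ i, ⟪S i X, Z⟫ * ⟪S i (X + Y), Z⟫
          = ⟪S i X, Z⟫ * ⟪S i X, Z⟫ + ⟪S i X, Z⟫ * ⟪S i Y, Z⟫ := by
        intro i; rw [hexp i]; ring
      rw [Finset.sum_congr rfl fun i _ => this i, Finset.sum_add_distrib, hip0, add_zero]
    have hipYM : ∑ i, ⟪S i Y, Z⟫ * ⟪S i (X + Y), Z⟫
        = ∑ i, ⟪S i Y, Z⟫ * ⟪S i Y, Z⟫ := by
      have : ∀ i, ⟪S i Y, Z⟫ * ⟪S i (X + Y), Z⟫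
          = ⟪S i Y, Z⟫ * ⟪S i X, Z⟫ + ⟪S i Y, Z⟫ * ⟪S i Y, Z⟫ := by
        intro i; rw [hexp i]; ring
      rw [Finset.sum_congr rfl fun i _ => this i, Finset.sum_add_distrib, hsymsum, hip0,
        zero_add]
    have kM1 := keyI S hsymm hcl X (X + Y) Z (hc X hX (X + Y) hM Z hZ)
    have kM2 := keyI S hsymm hcl Y (X + Y) Z (hc Y hY (X + Y) hM Z hZ)
    rw [hMM, hipXM, hXM, mul_one] at kM1
    rw [hMM, hipYM, hYM, mul_one] at kM2
    linarith
  · have k1 := keyI S hsymm hcl X Y Z (hc X hX Y hY Z hZ)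
    have k2 := keyI S hsymm hcl Y X Z (hc Y hY X hX Z hZ)
    rw [hYu, one_mul] at k1
    rw [hXu, one_mul, hsymsum, hyx] at k2
    exact (mul_right_cancel₀ h (by linarith)).symm

lemma hswap (hsymm : ∀ i, LinearMap.adjoint (S i) = S i) (i : Fin 9) (x z : E16) :
    ⟪S i x, z⟫ = ⟪S i z, x⟫ := by
  rw [sAdj S hsymm]; exact real_inner_comm _ _

lemma orthM (hsymm : ∀ i, LinearMap.adjoint (S i) = S i)
    (hcl : ∀ i j, S i * S j + S j * S i =
      if i = j then (2 : ℝ) • (1 : E16 →ₗ[ℝ] E16) else 0)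
    (E₁ E₂ : Submodule ℝ E16)
    (hc1 : ∀ X ∈ E₁, ∀ Y ∈ E₁, ∀ Z ∈ E₂,
      ∑ i, (⟪S i X, Z⟫ • S i Y - ⟪S i Y, Z⟫ • S i X) = 0)
    (hc2 : ∀ X ∈ E₂, ∀ Y ∈ E₂, ∀ Z ∈ E₁,
      ∑ i, (⟪S i X, Z⟫ • S i Y - ⟪S i Y, Z⟫ • S i X) = 0)
    (X Y Z W : E16) (hX : X ∈ E₁) (hY : Y ∈ E₁) (hZ : Z ∈ E₂) (hW : W ∈ E₂)
    (hWu : ⟪W, W⟫ = 1) (hXY : ⟪X, Y⟫ = 0) (hZW : ⟪Z, W⟫ = 0) :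
    ∑ i, ⟪S i X, Z⟫ * ⟪S i Y, W⟫ = 0 := by
  have swap2 : ∀ v : E16, v ∈ E₁ → ∑ i, ⟪S i v, Z⟫ * ⟪S i v, W⟫ = 0 := by
    intro v hv
    have h0 := orthA S hsymm hcl Z W v (hc2 Z hZ W hW v hv) hWu hZW
    rw [← h0]
    exact Finset.sum_congr rfl fun i _ => by
      rw [hswap S hsymm i v Z, hswap S hsymm i v W]
  have hXX := swap2 X hX
  have hYY := swap2 Y hY
  have hMM := swap2 (X + Y) (add_mem hX hY)
  have hexpand : ∑ i, ⟪S i (X + Y), Z⟫ * ⟪S i (X + Y), W⟫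
      = (∑ i, ⟪S i X, Z⟫ * ⟪S i X, W⟫) + ((∑ i, ⟪S i X, Z⟫ * ⟪S i Y, W⟫)
        + ((∑ i, ⟪S i Y, Z⟫ * ⟪S i X, W⟫) + ∑ i, ⟪S i Y, Z⟫ * ⟪S i Y, W⟫)) := by
    rw [← Finset.sum_add_distrib, ← Finset.sum_add_distrib, ← Finset.sum_add_distrib]
    exact Finset.sum_congr rfl fun i _ => by
      rw [map_add, inner_add_left, inner_add_left]; ring
  have hIII := keyIII S X Y Z (hc1 X hX Y hY Z hZ) W
  rw [hMM, hXX, hYY] at hexpand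
  rw [← hIII] at hexpand
  linarith

end keys

/-- Algebraic core of the proof of Lemma 7(4): for a `Cl⁺(9)`-system on `ℝ¹⁶`, there is
no orthogonal decomposition `ℝ¹⁶ = E₁ ⊕ E₂` into nonzero subspaces such that
`Σᵢ (⟨SᵢX,Z⟩SᵢY − ⟨SᵢY,Z⟩SᵢX) = 0` for all `X, Y ∈ E_α`, `Z ∈ E_β`, `α ≠ β`. -/
theorem stmt19 (S : Fin 9 → (E16 →ₗ[ℝ] E16))
    (hsymm : ∀ i, LinearMap.adjoint (S i) = S i)
    (hcl : ∀ i j, S i * S j + S j * S i =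
      if i = j then (2 : ℝ) • (1 : E16 →ₗ[ℝ] E16) else 0) :
    ¬ ∃ E₁ E₂ : Submodule ℝ E16, E₁ ≠ ⊥ ∧ E₂ ≠ ⊥ ∧ E₁ ⊔ E₂ = ⊤ ∧
      (∀ x ∈ E₁, ∀ y ∈ E₂, (inner ℝ x y : ℝ) = 0) ∧
      (∀ X ∈ E₁, ∀ Y ∈ E₁, ∀ Z ∈ E₂,
        ∑ i, ((inner ℝ (S i X) Z : ℝ) • S i Y - (inner ℝ (S i Y) Z : ℝ) • S i X) = 0) ∧
      (∀ X ∈ E₂, ∀ Y ∈ E₂, ∀ Z ∈ E₁,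
        ∑ i, ((inner ℝ (S i X) Z : ℝ) • S i Y - (inner ℝ (S i Y) Z : ℝ) • S i X) = 0) := by
  classical
  rintro ⟨E₁, E₂, hE₁, hE₂, hsup, horth, hc1, hc2⟩
  have h16 : Module.finrank ℝ E16 = 16 := by simp
  -- unit vectors
  have unitc : ∀ v : E16, v ≠ 0 → ⟪(‖v‖⁻¹ • v : E16), ‖v‖⁻¹ • v⟫ = 1 := by
    intro v hv
    rw [real_inner_smul_left, real_inner_smul_right, real_inner_self_eq_norm_mul_norm]
    have : ‖v‖ ≠ 0 := norm_ne_zero_iff.mpr hv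
    field_simp
  have unit_of : ∀ p : Submodule ℝ E16, p ≠ ⊥ → ∃ u ∈ p, ⟪u, u⟫ = 1 := by
    intro p hp
    obtain ⟨v, hv, hv0⟩ := (Submodule.ne_bot_iff p).mp hp
    exact ⟨‖v‖⁻¹ • v, p.smul_mem _ hv, unitc v hv0⟩
  obtain ⟨x₀, hx₀, hx₀u⟩ := unit_of E₁ hE₁
  obtain ⟨z₀, hz₀, hz₀u⟩ := unit_of E₂ hE₂
  -- dimension facts
  have d1pos : Module.finrank ℝ E₁ ≠ 0 := by
    rw [ne_eq, Submodule.finrank_eq_zero]; exact hE₁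
  have d2pos : Module.finrank ℝ E₂ ≠ 0 := by
    rw [ne_eq, Submodule.finrank_eq_zero]; exact hE₂
  have hdim16 : 16 ≤ Module.finrank ℝ E₁ + Module.finrank ℝ E₂ := by
    have h := Submodule.finrank_sup_add_finrank_inf_eq E₁ E₂
    rw [hsup, finrank_top, h16] at h
    omega
  by_cases hall : ∀ x ∈ E₁, ∀ z ∈ E₂, ⟪x, x⟫ = 1 → ⟪z, z⟫ = 1 → ∀ i, ⟪S i x, z⟫ = 0
  · -- degenerate case : all S i map E₁ into E₂ᗮ and E₂ into E₁ᗮ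
    have hallgen : ∀ x ∈ E₁, ∀ z ∈ E₂, ∀ i : Fin 9, ⟪S i x, z⟫ = 0 := by
      intro x hx z hz i
      by_cases hx0 : x = 0
      · simp [hx0]
      by_cases hz0 : z = 0
      · simp [hz0]
      have h0 := hall (‖x‖⁻¹ • x) (E₁.smul_mem _ hx) (‖z‖⁻¹ • z) (E₂.smul_mem _ hz)
        (unitc x hx0) (unitc z hz0) i
      rw [map_smul, real_inner_smul_left, real_inner_smul_right] at h0
      have hxn : ‖x‖ ≠ 0 := norm_ne_zero_iff.mpr hx0
      have hzn : ‖z‖ ≠ 0 := norm_ne_zero_iff.mpr hz0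
      field_simp at h0
      simpa using h0
    have hmem2 : ∀ i : Fin 9, S i x₀ ∈ E₂ᗮ := by
      intro i
      rw [Submodule.mem_orthogonal]
      intro u hu
      rw [real_inner_comm]
      exact hallgen x₀ hx₀ u hu i
    have hmem1 : ∀ i : Fin 9, S i z₀ ∈ E₁ᗮ := by
      intro i
      rw [Submodule.mem_orthogonal]
      intro u hu
      rw [real_inner_comm, hswap S hsymm i z₀ u]
      exact hallgen u hu z₀ hz₀ i
    have key9 : ∀ (p : Submodule ℝ E16) (w : E16), ⟪w, w⟫ = 1 →
        (∀ i : Fin 9, S i w ∈ pᗮ) → Module.finrank ℝ p ≤ 7 := by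
      intro p w hwu hmem
      have hON : Orthonormal ℝ (fun i : Fin 9 => (⟨S i w, hmem i⟩ : ↥pᗮ)) := by
        rw [orthonormal_iff_ite]
        intro i j
        have hre : (inner ℝ (⟨S i w, hmem i⟩ : ↥pᗮ) (⟨S j w, hmem j⟩ : ↥pᗮ) : ℝ)
            = ⟪S i w, S j w⟫ := rfl
        rw [hre, F2 S hsymm hcl i j w, hwu]
      have h9 : 9 ≤ Module.finrank ℝ ↥pᗮ := by
        simpa using hON.linearIndependent.fintype_card_le_finrank
      have hadd := p.finrank_add_finrank_orthogonal
      rw [h16] at hadd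
      omega
    have k2 := key9 E₂ x₀ hx₀u hmem2
    have k1 := key9 E₁ z₀ hz₀u hmem1
    omega
  · push_neg at hall
    obtain ⟨x₁, hx₁, z₁, hz₁, hx₁u, hz₁u, i₀, hi₀⟩ := hall
    set κ := ∑ i, ⟪S i x₁, z₁⟫ * ⟪S i x₁, z₁⟫ with hκdef
    have hκpos : 0 < κ :=
      Finset.sum_pos' (fun i _ => mul_self_nonneg _)
        ⟨i₀, Finset.mem_univ _, mul_self_pos.mpr hi₀⟩
    have hconf : ∀ x ∈ E₁, ∀ z ∈ E₂, ⟪x, x⟫ = 1 → ⟪z, z⟫ = 1 →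
        ∑ i, ⟪S i x, z⟫ * ⟪S i x, z⟫ = κ := by
      intro x hx z hz hxu hzu
      have step1 : ∑ i, ⟪S i x, z⟫ * ⟪S i x, z⟫ = ∑ i, ⟪S i x, z₁⟫ * ⟪S i x, z₁⟫ := by
        have h := conf S hsymm hcl E₂ E₁ hc2 z z₁ x hz hz₁ hx hzu hz₁u
        calc ∑ i, ⟪S i x, z⟫ * ⟪S i x, z⟫ = ∑ i, ⟪S i z, x⟫ * ⟪S i z, x⟫ :=
              Finset.sum_congr rfl fun i _ => by rw [hswap S hsymm i x z]
          _ = ∑ i, ⟪S i z₁, x⟫ * ⟪S i z₁, x⟫ := h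
          _ = ∑ i, ⟪S i x, z₁⟫ * ⟪S i x, z₁⟫ :=
              Finset.sum_congr rfl fun i _ => by rw [hswap S hsymm i x z₁]
      rw [step1]
      exact conf S hsymm hcl E₁ E₂ hc1 x x₁ z₁ hx hx₁ hz₁ hxu hx₁u
    -- orthonormal bases of E₁ and E₂
    obtain ⟨e, he⟩ : ∃ e : Fin (Module.finrank ℝ E₁) → ↥E₁,
        ∀ a b, ⟪(e a : E16), (e b : E16)⟫ = if a = b then 1 else 0 :=
      ⟨stdOrthonormalBasis ℝ ↥E₁, fun a b => by
        rw [← Submodule.coe_inner]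
        exact orthonormal_iff_ite.mp (stdOrthonormalBasis ℝ ↥E₁).orthonormal a b⟩
    obtain ⟨f, hf⟩ : ∃ f : Fin (Module.finrank ℝ E₂) → ↥E₂,
        ∀ a b, ⟪(f a : E16), (f b : E16)⟫ = if a = b then 1 else 0 :=
      ⟨stdOrthonormalBasis ℝ ↥E₂, fun a b => by
        rw [← Submodule.coe_inner]
        exact orthonormal_iff_ite.mp (stdOrthonormalBasis ℝ ↥E₂).orthonormal a b⟩
    have heu : ∀ a, ⟪(e a : E16), (e a : E16)⟫ = 1 := fun a => by rw [he a a]; simp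
    have hfu : ∀ a, ⟪(f a : E16), (f a : E16)⟫ = 1 := fun a => by rw [hf a a]; simp
    -- the 9-dimensional family
    let v : Fin (Module.finrank ℝ E₁) × Fin (Module.finrank ℝ E₂) → EuclideanSpace ℝ (Fin 9) :=
      fun p => WithLp.toLp 2 (fun i => ⟪S i (e p.1 : E16), (f p.2 : E16)⟫ : Fin 9 → ℝ)
    have hvinner : ∀ p q, (inner ℝ (v p) (v q) : ℝ)
        = ∑ i, ⟪S i (e p.1 : E16), (f p.2 : E16)⟫ * ⟪S i (e q.1 : E16), (f q.2 : E16)⟫ := by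
      intro p q
      rw [PiLp.inner_apply]
      simp only [v, PiLp.toLp_apply, RCLike.inner_apply, conj_trivial]
      exact Finset.sum_congr rfl fun i _ => by ring
    have hdiag : ∀ p, (inner ℝ (v p) (v p) : ℝ) = κ := by
      intro p
      rw [hvinner]
      exact hconf _ (e p.1).2 _ (f p.2).2 (heu p.1) (hfu p.2)
    have hoff : ∀ p q, p ≠ q → (inner ℝ (v p) (v q) : ℝ) = 0 := by
      rintro ⟨a, b⟩ ⟨a', b'⟩ hpq
      rw [hvinner]
      by_cases hbb : b = b'
      · subst hbb
        have haa : a ≠ a' := fun h => hpq (by rw [h])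
        have hab : ⟪(e a : E16), (e a' : E16)⟫ = 0 := by rw [he a a']; simp [haa]
        exact orthA S hsymm hcl (e a) (e a') (f b)
          (hc1 _ (e a).2 _ (e a').2 _ (f b).2) (heu a') hab
      · by_cases haa : a = a'
        · subst haa
          have hzw : ⟪(f b : E16), (f b' : E16)⟫ = 0 := by rw [hf b b']; simp [hbb]
          have h0 := orthA S hsymm hcl (f b) (f b') (e a)
            (hc2 _ (f b).2 _ (f b').2 _ (e a).2) (hfu b') hzw
          rw [← h0]
          exact Finset.sum_congr rfl fun i _ => by
            rw [hswap S hsymm i (e a : E16) (f b : E16),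
              hswap S hsymm i (e a : E16) (f b' : E16)]
        · have hab : ⟪(e a : E16), (e a' : E16)⟫ = 0 := by rw [he a a']; simp [haa]
          have hzw : ⟪(f b : E16), (f b' : E16)⟫ = 0 := by rw [hf b b']; simp [hbb]
          exact orthM S hsymm hcl E₁ E₂ hc1 hc2 (e a) (e a') (f b) (f b')
            (e a).2 (e a').2 (f b).2 (f b').2 (hfu b') hab hzw
    have hli : LinearIndependent ℝ v := by
      rw [Fintype.linearIndependent_iff]
      intro c hc q
      have h := congrArg (fun w : EuclideanSpace ℝ (Fin 9) => (inner ℝ (v q) w : ℝ)) hc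
      simp only [inner_zero_right] at h
      rw [inner_sum] at h
      have hsum : ∑ p, (inner ℝ (v q) (c p • v p) : ℝ) = c q * κ := by
        rw [Finset.sum_eq_single q]
        · rw [real_inner_smul_right, hdiag]
        · intro p _ hpq
          rw [real_inner_smul_right, hoff q p (Ne.symm hpq), mul_zero]
        · intro hq; exact absurd (Finset.mem_univ q) hq
      rw [hsum] at h
      exact (mul_eq_zero.mp h).resolve_right (ne_of_gt hκpos)
    have hcard := hli.fintype_card_le_finrank
    have hprod : Module.finrank ℝ E₁ * Module.finrank ℝ E₂ ≤ 9 := by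
      simpa using hcard
    have h1 : 1 ≤ Module.finrank ℝ E₁ := Nat.pos_of_ne_zero d1pos
    have h2 : 1 ≤ Module.finrank ℝ E₂ := Nat.pos_of_ne_zero d2pos
    have e1 : Module.finrank ℝ E₂ ≤ 9 := by
      calc Module.finrank ℝ E₂ = 1 * Module.finrank ℝ E₂ := (one_mul _).symm
        _ ≤ Module.finrank ℝ E₁ * Module.finrank ℝ E₂ := Nat.mul_le_mul_right _ h1
        _ ≤ 9 := hprod
    have e2 : Module.finrank ℝ E₁ ≤ 9 := by
      calc Module.finrank ℝ E₁ = Module.finrank ℝ E₁ * 1 := (mul_one _).symm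
        _ ≤ Module.finrank ℝ E₁ * Module.finrank ℝ E₂ := Nat.mul_le_mul_left _ h2
        _ ≤ 9 := hprod
    have f1 : 7 ≤ Module.finrank ℝ E₁ := by omega
    have f2 : 7 ≤ Module.finrank ℝ E₂ := by omega
    have : 49 ≤ Module.finrank ℝ E₁ * Module.finrank ℝ E₂ := Nat.mul_le_mul f1 f2
    omega
end
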